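/- For a critical binary Galton–Watson branching process {U_n} starting from one individual (offspring distribution p₀ = p₂ = 1/2), the survival probability satisfies P(U_n > 0) ~ 2/n as n → ∞, i.e., lim_{n→∞} n·P(U_n > 0) = 2. -/

import Mathlib

open Filter Finset Topology

/-- For a critical binary Galton–Watson branching process (offspring distribution
`p₀ = p₂ = 1/2`), the extinction probabilities `q_n = P(U_n = 0)` satisfy `q₀ = 0`,
`q_{n+1} = (1 + q_n²)/2`, and the survival probability `1 - q_n = P(U_n > 0)` satisfies
`n · P(U_n > 0) → 2` as `n → ∞`. -/
theorem stmt_4 (q : ℕ → ℝ) (hq0 : q 0 = 0)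
    (hqrec : ∀ n : ℕ, q (n + 1) = (1 + (q n) ^ 2) / 2) :
    Filter.Tendsto (fun n : ℕ => (n : ℝ) * (1 - q n)) Filter.atTop (nhds 2) := by
  obtain ⟨s, hsq, hs1, hrec⟩ : ∃ s : ℕ → ℝ, (∀ n, 1 - q n = s n) ∧ s 0 = 1 ∧
      ∀ n, s (n + 1) = s n * (1 - s n / 2) :=
    ⟨fun n => 1 - q n, fun _ => rfl, by simp [hq0], fun n => by simp [hqrec]; ring⟩
  have hpos : ∀ n, 0 < s n ∧ s n ≤ 1 := by
    intro n
    induction n with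
    | zero => simp [hs1]
    | succ n ih =>
      obtain ⟨h1, h2⟩ := ih
      rw [hrec]
      exact ⟨mul_pos h1 (by linarith), by nlinarith⟩
  have hub : ∀ n, s n ≤ 2 / (n + 1) := by
    intro n
    induction n with
    | zero => rw [hs1]; norm_num
    | succ n ih =>
      obtain ⟨h1, h2⟩ := hpos n
      have hn : (0:ℝ) < (n:ℝ) + 1 := by positivity
      have hx : s n * ((n:ℝ) + 1) ≤ 2 := (le_div_iff₀ hn).mp ih
      rw [hrec]
      push_cast
      rw [le_div_iff₀ (by positivity)]
      nlinarith [sq_nonneg (2 - ((n:ℝ) + 1) * s n),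
        mul_nonneg (Nat.cast_nonneg (α := ℝ) n) (by linarith : (0:ℝ) ≤ 2 - ((n:ℝ)+1) * s n)]
  have hs0 : Tendsto s atTop (𝓝 0) := by
    apply squeeze_zero (fun n => (hpos n).1.le) hub
    have h := tendsto_one_div_add_atTop_nhds_zero_nat (𝕜 := ℝ)
    have := h.const_mul 2
    simpa [div_eq_mul_inv, mul_assoc, mul_comm, mul_left_comm] using this
  set d : ℕ → ℝ := fun n => 2⁻¹ / (1 - s n / 2) with hd
  have hden : ∀ n, 1 - s n / 2 ≠ 0 := by
    intro n
    have h2 := (hpos n).2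
    intro h; linarith
  have hdt : Tendsto d atTop (𝓝 (1/2)) := by
    have hden' : Tendsto (fun n => 1 - s n / 2) atTop (𝓝 1) := by
      have := (hs0.div_const 2).const_sub 1
      simpa using this
    have := (tendsto_const_nhds (x := (2:ℝ)⁻¹) (f := atTop (α := ℕ))).div hden' one_ne_zero
    rw [show (1:ℝ)/2 = 2⁻¹/1 by norm_num]; exact this
  have hinv : ∀ n, (s n)⁻¹ = 1 + ∑ i ∈ range n, d i := by
    intro n
    induction n with
    | zero => simp [hs1]
    | succ n ih =>
      rw [sum_range_succ, ← add_assoc, ← ih, hrec]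
      have hx := (hpos n).1.ne'
      have hy := hden n
      have h2s : (2:ℝ) - s n ≠ 0 := fun h => hy (by rw [show s n = 2 by linarith]; norm_num)
      simp only [hd]
      field_simp
      ring
  have hmain : Tendsto (fun n : ℕ => (n:ℝ)⁻¹ * (s n)⁻¹) atTop (𝓝 (1/2)) := by
    have hces : Tendsto (fun n : ℕ => (n:ℝ)⁻¹ • ∑ i ∈ range n, d i) atTop (𝓝 (1/2)) :=
      hdt.cesaro
    have hinvn : Tendsto (fun n : ℕ => (n:ℝ)⁻¹) atTop (𝓝 0) :=
      tendsto_inv_atTop_nhds_zero_nat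
    have hsum := hinvn.add hces
    have heq : (fun n : ℕ => (n:ℝ)⁻¹ * (s n)⁻¹)
        = fun n : ℕ => (n:ℝ)⁻¹ + (n:ℝ)⁻¹ • ∑ i ∈ range n, d i := by
      funext n
      rw [hinv n, smul_eq_mul]
      ring
    rw [heq]
    simpa using hsum
  have hfin : Tendsto (fun n : ℕ => ((n:ℝ)⁻¹ * (s n)⁻¹)⁻¹) atTop (𝓝 2) := by
    have h := hmain.inv₀ (by norm_num)
    have h2 : ((1:ℝ)/2)⁻¹ = 2 := by norm_num
    rwa [h2] at h
  apply hfin.congr'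
  filter_upwards [eventually_ge_atTop 1] with n hn
  rw [mul_inv, inv_inv, inv_inv, hsq]
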